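/- For a graded Artinian ideal I ⊆ R, if the socle of R/mono(I) is nonzero in degree j, then the socle of R/I is nonzero in degree j. (Equivalently β_{n,j}(R/mono(I)) ≠ 0 implies β_{n,j}(R/I) ≠ 0.) -/

import Mathlib

open MvPolynomial

/-- A (monic) monomial in a polynomial ring. -/
def IsMonomial {k : Type*} [Field k] {n : ℕ} (f : MvPolynomial (Fin n) k) : Prop :=
  ∃ s : Fin n →₀ ℕ, f = MvPolynomial.monomial s 1

/-- `mono I` is the largest monomial subideal of `I`: the ideal generated by all
monomials contained in `I`. -/
noncomputable def mono {k : Type*} [Field k] {n : ℕ} (I : Ideal (MvPolynomial (Fin n) k)) :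
    Ideal (MvPolynomial (Fin n) k) :=
  Ideal.span {f | IsMonomial f ∧ f ∈ I}

/-- A monomial ideal is one generated by its monomials. -/
def IsMonomialIdeal {k : Type*} [Field k] {n : ℕ} (I : Ideal (MvPolynomial (Fin n) k)) : Prop :=
  mono I = I

/-- The homogeneous maximal ideal `(x₁, …, xₙ)`. -/
noncomputable def maxIdeal (k : Type*) [Field k] (n : ℕ) : Ideal (MvPolynomial (Fin n) k) :=
  Ideal.span (Set.range MvPolynomial.X)

/-- A graded (homogeneous) ideal. -/
def IsHomogeneousIdeal {k : Type*} [Field k] {n : ℕ}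
    (I : Ideal (MvPolynomial (Fin n) k)) : Prop :=
  ∀ f ∈ I, ∀ i : ℕ, MvPolynomial.homogeneousComponent i f ∈ I

lemma mono_le {k : Type*} [Field k] {n : ℕ} (I : Ideal (MvPolynomial (Fin n) k)) :
    mono I ≤ I := Ideal.span_le.2 fun _ hf => hf.2

/-- Membership in an ideal spanned by monomials is monomial-wise: every monomial
appearing in an element of the span lies in the span. -/
lemma monomial_mem_of_mem_span {k : Type*} [Field k] {n : ℕ}
    {S : Set (MvPolynomial (Fin n) k)} (hS : ∀ f ∈ S, IsMonomial f)
    {p : MvPolynomial (Fin n) k} (hp : p ∈ Ideal.span S) :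
    ∀ s : Fin n →₀ ℕ, coeff s p ≠ 0 → (monomial s (1 : k)) ∈ Ideal.span S := by
  refine Submodule.span_induction (p := fun x _ => ∀ s, coeff s x ≠ 0 →
      (monomial s (1 : k)) ∈ Ideal.span S) ?_ ?_ ?_ ?_ hp
  · intro x hx s hs
    obtain ⟨t, rfl⟩ := hS x hx
    rw [coeff_monomial] at hs
    split_ifs at hs with h
    · subst h; exact Ideal.subset_span hx
    · exact absurd rfl hs
  · intro s hs; simp at hs
  · intro x y _ _ hx hy s hs
    rw [coeff_add] at hs
    by_cases h : coeff s x = 0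
    · exact hy s (by simpa [h] using hs)
    · exact hx s h
  · intro r x _ hx s hs
    rw [smul_eq_mul, coeff_mul] at hs
    obtain ⟨⟨u, v⟩, huv, hne⟩ := Finset.exists_ne_zero_of_sum_ne_zero hs
    have hv : coeff v x ≠ 0 := fun h0 => hne (by simp [h0])
    have := hx v hv
    have heq : (monomial s (1 : k)) = monomial u 1 * monomial v 1 := by
      rw [monomial_mul, one_mul, (Finset.HasAntidiagonal.mem_antidiagonal).1 huv]
    rw [heq]
    exact Ideal.mul_mem_left _ _ this

theorem socle_mono_nonzero {k : Type*} [Field k] {n : ℕ}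
    (I : Ideal (MvPolynomial (Fin n) k)) (hgr : IsHomogeneousIdeal I)
    (hart : ∃ s : ℕ, (maxIdeal k n) ^ s ≤ I) (j : ℕ)
    (h : ∃ f : MvPolynomial (Fin n) k, f.IsHomogeneous j ∧ f ∉ mono I ∧
          ∀ i : Fin n, MvPolynomial.X i * f ∈ mono I) :
    ∃ f : MvPolynomial (Fin n) k, f.IsHomogeneous j ∧ f ∉ I ∧
      ∀ i : Fin n, MvPolynomial.X i * f ∈ I := by
  obtain ⟨f, hf, hfm, hmul⟩ := h
  by_cases hfI : f ∈ I
  · -- extract a monomial of f not in mono I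
    have hSmono : ∀ g ∈ {f | IsMonomial f ∧ f ∈ I}, IsMonomial g := fun _ hg => hg.1
    have hex : ∃ s ∈ f.support, (monomial s (1 : k)) ∉ mono I := by
      by_contra hall
      push_neg at hall
      apply hfm
      rw [f.as_sum]
      exact Ideal.sum_mem _ fun s hs => by
        have : (monomial s (f.coeff s)) = C (f.coeff s) * monomial s 1 := by
          rw [C_mul_monomial, mul_one]
        rw [this]
        exact Ideal.mul_mem_left _ _ (hall s hs)
    obtain ⟨s, hs, hsm⟩ := hex
    refine ⟨monomial s 1, ?_, ?_, ?_⟩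
    · have hd : (Finsupp.weight 1) s = j := hf (mem_support_iff.1 hs)
      have : s.sum (fun _ e => e) = j := by
        rw [← hd]; simp [Finsupp.weight, Finsupp.linearCombination, Finsupp.sum]
      exact this ▸ isHomogeneous_monomial _ rfl
    · intro hI
      exact hsm (Ideal.subset_span ⟨⟨s, rfl⟩, hI⟩)
    · intro i
      have h1 : coeff (Finsupp.single i 1 + s) (X i * f) ≠ 0 := by
        rw [coeff_X_mul]; exact mem_support_iff.1 hs
      have h2 := monomial_mem_of_mem_span hSmono (hmul i) _ h1
      have h3 : X i * monomial s (1 : k) = monomial (Finsupp.single i 1 + s) 1 := by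
        rw [X, monomial_mul, one_mul]
      rw [h3]
      exact mono_le I h2
  · exact ⟨f, hf, hfI, fun i => mono_le I (hmul i)⟩
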